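/- Let d ≥ 4 even, n ≥ 3, and let g̃ : ℝ^{n-1} → ℝ be a non-negative polynomial with a zero y ∈ ℝ^{n-1} at which the Hessian matrix Hess_y g̃ is positive definite. Then there exists δ > 0 such that ∫_{B(y,δ)} g̃(z)^{-n/d} dz < ∞. -/

import Mathlib

open MeasureTheory MvPolynomial Real Set Module

set_option maxHeartbeats 1000000

private lemma hasDerivAt_eval_line {m : ℕ} (y v : Fin m → ℝ) (p : MvPolynomial (Fin m) ℝ) (t : ℝ) :
    HasDerivAt (fun s : ℝ => eval (fun i => y i + s * v i) p)
      (∑ i, eval (fun i => y i + t * v i) (pderiv i p) * v i) t := by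
  induction p using MvPolynomial.induction_on with
  | C a => simp only [eval_C, pderiv_C, map_zero, zero_mul, Finset.sum_const_zero]
           exact hasDerivAt_const t a
  | add p q hp hq =>
      simpa only [map_add, add_mul, Finset.sum_add_distrib] using hp.fun_add hq
  | mul_X p j hp =>
      have hl : HasDerivAt (fun s : ℝ => y j + s * v j) (v j) t := by
        simpa using (hasDerivAt_mul_const (v j)).const_add (y j)
      have := hp.fun_mul hl
      simp only [eval_mul, eval_X] at this ⊢
      refine this.congr_deriv ?_
      symm
      classical
      simp only [pderiv_mul, map_add, eval_mul, eval_X, pderiv_X, add_mul,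
        Pi.single_apply, apply_ite, map_one, map_zero,
        ite_mul, one_mul, zero_mul, mul_ite, mul_one, mul_zero]
      rw [Finset.sum_congr rfl (fun x _ => by
        show _ = eval (fun i => y i + t * v i) (pderiv x p) * (y j + t * v j) * v x
          + if j = x then eval (fun i => y i + t * v i) p * v x else 0
        split <;> simp)]
      rw [Finset.sum_add_distrib, Finset.sum_ite_eq Finset.univ j
        (fun x => eval (fun i => y i + t * v i) p * v x)]
      simp only [Finset.mem_univ, if_true, Finset.sum_mul]
      congr 1
      exact Finset.sum_congr rfl (fun x _ => by ring)

private lemma radial_int (m : ℕ) (s δ : ℝ) (h0 : 0 < s) (hs : s < m) (hδ : 0 < δ) :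
    IntegrableOn (fun x : EuclideanSpace ℝ (Fin m) => ‖x‖ ^ (-s))
      (Metric.ball 0 δ) volume := by
  set E := EuclideanSpace ℝ (Fin m)
  set μ : Measure E := volume.restrict (Metric.ball 0 δ) with hμ
  constructor
  · exact (Measurable.aestronglyMeasurable (by fun_prop))
  rw [HasFiniteIntegral,
    lintegral_enorm_of_nonneg (fun a => rpow_nonneg (norm_nonneg _) _),
    lintegral_eq_lintegral_meas_le μ
      (Filter.Eventually.of_forall (fun a => rpow_nonneg (norm_nonneg _) _))
      (Measurable.aemeasurable (by fun_prop))]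
  set T : ℝ := δ ^ (-s) with hT
  have hTpos : 0 < T := rpow_pos_of_pos hδ _
  have hsub : ∀ t : ℝ, 0 < t → {a : E | t ≤ ‖a‖ ^ (-s)} ⊆ Metric.closedBall 0 (t ^ (-s)⁻¹) := by
    intro t ht a ha
    simp only [mem_setOf_eq] at ha
    have hapos : 0 < ‖a‖ := by
      rcases eq_or_lt_of_le (norm_nonneg a) with h | h
      · exfalso
        rw [← h] at ha
        rw [Real.zero_rpow (neg_ne_zero.2 h0.ne')] at ha
        exact absurd (lt_of_lt_of_le ht ha) (lt_irrefl 0)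
      · exact h
    rw [mem_closedBall_zero_iff]
    exact (Real.le_rpow_inv_iff_of_neg hapos ht (by linarith : -s < 0)).2 ha
  calc
    ∫⁻ t in Ioi 0, μ {a : E | t ≤ ‖a‖ ^ (-s)}
      ≤ ∫⁻ t in Ioc 0 T ∪ Ioi T, μ {a : E | t ≤ ‖a‖ ^ (-s)} :=
        lintegral_mono_set Ioi_subset_Ioc_union_Ioi
    _ ≤ (∫⁻ t in Ioc 0 T, μ {a : E | t ≤ ‖a‖ ^ (-s)}) +
        ∫⁻ t in Ioi T, μ {a : E | t ≤ ‖a‖ ^ (-s)} := lintegral_union_le _ _ _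
    _ < ⊤ := by
      refine ENNReal.add_lt_top.2 ⟨?_, ?_⟩
      · calc
          ∫⁻ t in Ioc 0 T, μ {a : E | t ≤ ‖a‖ ^ (-s)}
            ≤ ∫⁻ _ in Ioc 0 T, volume (Metric.ball (0:E) δ) :=
              setLIntegral_mono' measurableSet_Ioc
                (fun t _ => le_trans (measure_mono (Set.subset_univ _))
                  (le_of_eq (Measure.restrict_apply_univ _)))
          _ = volume (Metric.ball (0:E) δ) * volume (Ioc 0 T) := setLIntegral_const _ _
          _ < ⊤ := ENNReal.mul_lt_top measure_ball_lt_top (by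
              rw [Real.volume_Ioc]; exact ENNReal.ofReal_lt_top)
      · have hbound : ∀ t ∈ Ioi T, μ {a : E | t ≤ ‖a‖ ^ (-s)} ≤
            ENNReal.ofReal (t ^ ((-s)⁻¹ * m)) * volume (Metric.ball (0:E) 1) := by
          intro t ht
          have ht0 : 0 < t := lt_trans hTpos ht
          calc
            μ {a : E | t ≤ ‖a‖ ^ (-s)}
              ≤ volume (Metric.closedBall (0:E) (t ^ (-s)⁻¹)) :=
                le_trans (Measure.restrict_apply_le _ _)
                  (measure_mono (hsub t ht0))
            _ = ENNReal.ofReal ((t ^ (-s)⁻¹) ^ finrank ℝ E) * volume (Metric.ball (0:E) 1) :=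
                Measure.addHaar_closedBall _ _ (le_of_lt (rpow_pos_of_pos ht0 _))
            _ = ENNReal.ofReal (t ^ ((-s)⁻¹ * m)) * volume (Metric.ball (0:E) 1) := by
                congr 2
                rw [← Real.rpow_natCast (t ^ (-s)⁻¹) (finrank ℝ E), ← Real.rpow_mul ht0.le]
                congr 2
                simp [E, finrank_euclideanSpace_fin]
        calc
          ∫⁻ t in Ioi T, μ {a : E | t ≤ ‖a‖ ^ (-s)}
            ≤ ∫⁻ t in Ioi T, ENNReal.ofReal (t ^ ((-s)⁻¹ * m)) *
                volume (Metric.ball (0:E) 1) :=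
              setLIntegral_mono' measurableSet_Ioi hbound
          _ = (∫⁻ t in Ioi T, ENNReal.ofReal (t ^ ((-s)⁻¹ * m))) *
                volume (Metric.ball (0:E) 1) :=
              lintegral_mul_const' _ _ measure_ball_lt_top.ne
          _ < ⊤ := by
              refine ENNReal.mul_lt_top ?_ measure_ball_lt_top
              refine IntegrableOn.setLIntegral_lt_top ?_
              refine integrableOn_Ioi_rpow_of_lt ?_ hTpos
              rw [← neg_inv, neg_mul, neg_lt_neg_iff, ← div_eq_inv_mul]
              exact (one_lt_div h0).2 hs

private lemma quad_lower {m : ℕ} (hm : 0 < m) (p : MvPolynomial (Fin m) ℝ)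
    (hnn : ∀ y : Fin m → ℝ, 0 ≤ eval y p)
    (y : Fin m → ℝ) (hy : eval y p = 0)
    (hHess : ∀ v : Fin m → ℝ, v ≠ 0 →
      0 < ∑ i, ∑ j, eval y (pderiv i (pderiv j p)) * v i * v j) :
    ∃ δ > 0, ∃ c > 0, ∀ z : Fin m → ℝ, ‖z - y‖ < δ → c * ‖z - y‖ ^ 2 ≤ eval z p := by
  classical
  set H : (Fin m → ℝ) × (Fin m → ℝ) → ℝ :=
    fun zv => ∑ i, ∑ j, eval zv.1 (pderiv i (pderiv j p)) * zv.2 i * zv.2 j with hH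
  have hHcont : Continuous H := by
    apply continuous_finset_sum; intro i _
    apply continuous_finset_sum; intro j _
    exact (((MvPolynomial.continuous_eval (p := pderiv i (pderiv j p))).comp
      continuous_fst).mul ((continuous_apply i).comp continuous_snd)).mul
      ((continuous_apply j).comp continuous_snd)
  have : Nontrivial (Fin m → ℝ) := by
    refine ⟨0, fun _ => 1, fun h => ?_⟩
    have := congrFun h ⟨0, hm⟩; norm_num at this
  set S : Set (Fin m → ℝ) := Metric.sphere 0 1 with hS
  have hScpt : IsCompact S := isCompact_sphere 0 1
  have hSne : S.Nonempty := NormedSpace.sphere_nonempty.2 zero_le_one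
  obtain ⟨v0, hv0S, hv0min⟩ := hScpt.exists_isMinOn hSne
    ((hHcont.comp (Continuous.prodMk_right y)).continuousOn)
  set ε : ℝ := H (y, v0) with hε
  have hεpos : 0 < ε := hHess v0 (by
    intro h0
    have : ‖v0‖ = 1 := mem_sphere_zero_iff_norm.1 hv0S
    rw [h0] at this; simp at this)
  -- compactness: find δ₀
  set K : Set ((Fin m → ℝ) × (Fin m → ℝ)) := Metric.closedBall y 1 ×ˢ S with hK
  have hKcpt : IsCompact K := (isCompact_closedBall y 1).prod hScpt
  set A : Set ((Fin m → ℝ) × (Fin m → ℝ)) := K ∩ H ⁻¹' (Set.Iic (ε / 2)) with hA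
  have hAcpt : IsCompact A := hKcpt.inter_right (isClosed_Iic.preimage hHcont)
  set C : Set (Fin m → ℝ) := Prod.fst '' A with hC
  have hCclosed : IsClosed C := (hAcpt.image continuous_fst).isClosed
  have hyC : y ∉ C := by
    rintro ⟨⟨z, v⟩, ⟨hKmem, hle⟩, rfl⟩
    have h1 : ε ≤ H (Prod.fst (z, v), v) := hv0min hKmem.2
    have h2 : H (z, v) ≤ ε / 2 := hle
    simp only at h1
    linarith
  obtain ⟨δ₀, hδ₀pos, hδ₀⟩ := Metric.isOpen_iff.1 hCclosed.isOpen_compl y hyC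
  set δ : ℝ := min δ₀ 1 with hδ
  have hδpos : 0 < δ := lt_min hδ₀pos one_pos
  refine ⟨δ, hδpos, ε / 4, by linarith, ?_⟩
  intro z hz
  rcases eq_or_ne z y with rfl | hne
  · simp [hy]
  · set t : ℝ := ‖z - y‖ with ht
    have htpos : 0 < t := by simpa [ht] using sub_ne_zero.2 hne
    set v : Fin m → ℝ := t⁻¹ • (z - y) with hv
    have hvnorm : ‖v‖ = 1 := by
      rw [hv, norm_smul, norm_inv, Real.norm_eq_abs, abs_of_pos htpos, ← ht,
        inv_mul_cancel₀ htpos.ne']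
    -- key: H along the segment is ≥ ε/2
    have hQ : ∀ s : ℝ, 0 ≤ s → s < δ → ε / 2 ≤ H (fun i => y i + s * v i, v) := by
      intro s hs0 hsδ
      set w : Fin m → ℝ := fun i => y i + s * v i with hw
      have hwy : w - y = s • v := by funext i; simp [hw, mul_comm]
      have hwnorm : ‖w - y‖ = s := by
        rw [hwy, norm_smul, Real.norm_eq_abs, abs_of_nonneg hs0, hvnorm, mul_one]
      have hwK : (w, v) ∈ K := by
        constructor
        · exact Metric.mem_closedBall.2 (by
            rw [dist_eq_norm, hwnorm]
            exact le_of_lt (lt_of_lt_of_le hsδ (min_le_right _ _)))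
        · exact mem_sphere_zero_iff_norm.2 hvnorm
      by_contra hcon
      push_neg at hcon
      have : (w, v) ∈ A := ⟨hwK, le_of_lt hcon⟩
      have : w ∈ C := ⟨(w, v), this, rfl⟩
      have : w ∈ (Cᶜ : Set _) := hδ₀ (by
        rw [Metric.mem_ball, dist_eq_norm, hwnorm]
        exact lt_of_lt_of_le hsδ (min_le_left _ _))
      exact this ‹w ∈ C›
    -- one-dimensional functions along the segment
    set g : ℝ → ℝ := fun s => eval (fun i => y i + s * v i) p with hg
    set D : ℝ → ℝ := fun s => ∑ i, eval (fun i => y i + s * v i) (pderiv i p) * v i with hDdef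
    have hgD : ∀ s, HasDerivAt g (D s) s := fun s => hasDerivAt_eval_line y v p s
    have hDD : ∀ s : ℝ, HasDerivAt D (H (fun i => y i + s * v i, v)) s := by
      intro s
      have h1 : HasDerivAt (fun u : ℝ => ∑ i, eval (fun i => y i + u * v i) (pderiv i p) * v i)
          (∑ i, (∑ j, eval (fun i => y i + s * v i) (pderiv j (pderiv i p)) * v j) * v i) s := by
        apply HasDerivAt.fun_sum
        intro i _
        exact (hasDerivAt_eval_line y v (pderiv i p) s).mul_const (v i)
      convert h1 using 1
      simp only [hH]
      rw [Finset.sum_comm]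
      simp only [Finset.sum_mul]
    have hg0 : g 0 = 0 := by
      have : (fun i => y i + 0 * v i) = y := by funext i; simp
      rw [hg]; simp only [this]; exact hy
    have hD0 : D 0 = 0 := by
      have hlm : IsLocalMin g 0 := by
        apply Filter.Eventually.of_forall
        intro s; rw [hg0]; exact hnn _
      exact hlm.hasDerivAt_eq_zero (hgD 0)
    have hDcont : Continuous D := by
      have : Differentiable ℝ D := fun s => (hDD s).differentiableAt
      exact this.continuous
    have hgcont : Continuous g := by
      have : Differentiable ℝ g := fun s => (hgD s).differentiableAt
      exact this.continuous
    have htδ : t < δ := hz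
    -- D s ≥ ε/2 * s on [0, t]
    have hmono1 : MonotoneOn (fun s => D s - ε / 2 * s) (Set.Icc 0 t) := by
      apply monotoneOn_of_deriv_nonneg (convex_Icc 0 t)
      · exact (hDcont.sub (continuous_const.mul continuous_id)).continuousOn
      · intro s _
        exact ((hDD s).sub ((hasDerivAt_id s).const_mul (ε / 2))).differentiableAt.differentiableWithinAt
      · intro s hs
        rw [interior_Icc] at hs
        have hds : HasDerivAt (fun u => D u - ε / 2 * u) (H (fun i => y i + s * v i, v) - ε / 2) s := by
          simpa using (hDD s).fun_sub ((hasDerivAt_id s).const_mul (ε / 2))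
        rw [hds.deriv]
        have := hQ s (le_of_lt hs.1) (lt_trans hs.2 htδ)
        linarith
    have hDlb : ∀ s ∈ Set.Icc (0:ℝ) t, ε / 2 * s ≤ D s := by
      intro s hs
      have := hmono1 (Set.left_mem_Icc.2 (le_of_lt htpos)) hs hs.1
      simp only [hD0, mul_zero, sub_zero, zero_sub] at this
      linarith
    -- g s ≥ ε/4 * s^2 on [0, t]
    have hmono2 : MonotoneOn (fun s => g s - ε / 4 * s ^ 2) (Set.Icc 0 t) := by
      apply monotoneOn_of_deriv_nonneg (convex_Icc 0 t)
      · exact (hgcont.sub (continuous_const.mul (continuous_pow 2))).continuousOn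
      · intro s _
        exact ((hgD s).sub (((hasDerivAt_pow 2 s)).const_mul (ε / 4))).differentiableAt.differentiableWithinAt
      · intro s hs
        rw [interior_Icc] at hs
        have hds : HasDerivAt (fun u => g u - ε / 4 * u ^ 2) (D s - ε / 4 * (2 * s)) s := by
          simpa using (hgD s).fun_sub (((hasDerivAt_pow 2 s)).const_mul (ε / 4))
        rw [hds.deriv]
        have := hDlb s ⟨le_of_lt hs.1, le_of_lt hs.2⟩
        linarith
    have hfin : g 0 - ε / 4 * (0:ℝ) ^ 2 ≤ g t - ε / 4 * t ^ 2 :=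
      hmono2 (Set.left_mem_Icc.2 (le_of_lt htpos))
        (Set.right_mem_Icc.2 (le_of_lt htpos)) (le_of_lt htpos)
    rw [hg0] at hfin
    have hfin2 : ε / 4 * t ^ 2 ≤ g t := by nlinarith [hfin]
    have hgt : g t = eval z p := by
      show eval (fun i => y i + t * v i) p = eval z p
      have harg : (fun i => y i + t * v i) = z := by
        funext i
        have hvi : v i = t⁻¹ * (z i - y i) := rfl
        rw [hvi, ← mul_assoc, mul_inv_cancel₀ htpos.ne', one_mul]
        ring
      rw [harg]
    rw [hgt] at hfin2
    exact hfin2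

theorem stmt19 (m d : ℕ) (hm : 2 ≤ m) (hd : 4 ≤ d) (hde : Even d)
    (p : MvPolynomial (Fin m) ℝ)
    (hnn : ∀ y : Fin m → ℝ, 0 ≤ eval y p)
    (y : Fin m → ℝ) (hy : eval y p = 0)
    (hHess : ∀ v : Fin m → ℝ, v ≠ 0 →
      0 < ∑ i, ∑ j, eval y (pderiv i (pderiv j p)) * v i * v j) :
    ∃ δ > 0, IntegrableOn
      (fun z : Fin m → ℝ => (eval z p) ^ (-(((m : ℝ) + 1) / d)))
      {z : Fin m → ℝ | ∑ i, (z i - y i) ^ 2 < δ ^ 2} volume := by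
  obtain ⟨δ, hδpos, c, hcpos, hlb⟩ :=
    quad_lower (by omega : 0 < m) p hnn y hy hHess
  set e : ℝ := ((m : ℝ) + 1) / d with he
  have hd' : (4:ℝ) ≤ d := by exact_mod_cast hd
  have hm' : (2:ℝ) ≤ m := by exact_mod_cast hm
  have hd0 : (0:ℝ) < d := by linarith
  have hepos : 0 < e := div_pos (by linarith) hd0
  have h2em : 2 * e < (m:ℝ) := by
    have h1 : 2 * ((m:ℝ)+1)/d ≤ 2*((m:ℝ)+1)/4 :=
      div_le_div_of_nonneg_left (by linarith) (by norm_num) hd'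
    rw [he, ← mul_div_assoc]
    linarith
  refine ⟨δ, hδpos, ?_⟩
  set S : Set (Fin m → ℝ) := {z | ∑ i, (z i - y i) ^ 2 < δ ^ 2} with hSdef
  have hQcont : Continuous (fun z : Fin m → ℝ => ∑ i, (z i - y i) ^ 2) := by
    apply continuous_finset_sum
    intro i _
    exact ((continuous_apply i).sub continuous_const).pow 2
  have hSmeas : MeasurableSet S :=
    (isOpen_lt hQcont continuous_const).measurableSet
  -- z ∈ S implies sup-norm ball membership
  have hSsub : ∀ z ∈ S, ‖z - y‖ < δ := by
    intro z hz
    have h1 : ‖z - y‖ ≤ Real.sqrt (∑ i, (z i - y i) ^ 2) := by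
      apply (pi_norm_le_iff_of_nonneg (Real.sqrt_nonneg _)).2
      intro i
      have h2 : (z i - y i) ^ 2 ≤ ∑ j, (z j - y j) ^ 2 :=
        Finset.single_le_sum (f := fun j => (z j - y j) ^ 2)
          (fun j _ => sq_nonneg _) (Finset.mem_univ i)
      have : ‖(z - y) i‖ = Real.sqrt ((z i - y i) ^ 2) := by
        simp [Real.norm_eq_abs, Real.sqrt_sq_eq_abs]
      rw [this]
      exact Real.sqrt_le_sqrt h2
    have h3 : Real.sqrt (∑ i, (z i - y i) ^ 2) < δ :=
      (Real.sqrt_lt' hδpos).2 hz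
    linarith
  -- lower bound with Euclidean quadratic
  have hlbS : ∀ z ∈ S, (c / m) * (∑ i, (z i - y i) ^ 2) ≤ eval z p := by
    intro z hz
    have hsum : (∑ i, (z i - y i) ^ 2) ≤ m * ‖z - y‖ ^ 2 := by
      calc ∑ i, (z i - y i) ^ 2 ≤ ∑ _i : Fin m, ‖z - y‖ ^ 2 := by
            apply Finset.sum_le_sum
            intro i _
            have : |z i - y i| ≤ ‖z - y‖ := by
              simpa [Real.norm_eq_abs] using norm_le_pi_norm (z - y) i
            calc (z i - y i) ^ 2 = |z i - y i| ^ 2 := (sq_abs _).symm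
              _ ≤ ‖z - y‖ ^ 2 := by gcongr
        _ = m * ‖z - y‖ ^ 2 := by simp [Finset.sum_const, nsmul_eq_mul, Finset.card_univ, Fintype.card_fin]
    have hm0 : (0:ℝ) < m := by linarith
    calc (c / m) * (∑ i, (z i - y i) ^ 2) ≤ (c / m) * (m * ‖z - y‖ ^ 2) := by
          apply mul_le_mul_of_nonneg_left hsum (by positivity)
      _ = c * ‖z - y‖ ^ 2 := by field_simp
      _ ≤ eval z p := hlb z (hSsub z hz)
  set c' : ℝ := c / m with hc'
  have hc'pos : 0 < c' := by positivity
  -- integrability of the dominating radial function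
  have h0 : IntegrableOn (fun x : EuclideanSpace ℝ (Fin m) => ‖x‖ ^ (-(2*e)))
      (Metric.ball 0 δ) volume :=
    radial_int m (2*e) δ (by linarith) h2em hδpos
  have hF : IntegrableOn (fun w : Fin m → ℝ => (∑ i, w i ^ 2) ^ (-e))
      {w : Fin m → ℝ | ∑ i, w i ^ 2 < δ ^ 2} volume := by
    have hmp := EuclideanSpace.volume_preserving_symm_measurableEquiv_toLp (Fin m)
    have hemb := ((MeasurableEquiv.toLp 2 (Fin m → ℝ)).symm).measurableEmbedding
    rw [← hmp.integrableOn_comp_preimage hemb]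
    have hnormsq : ∀ x : EuclideanSpace ℝ (Fin m),
        (∑ i, (((MeasurableEquiv.toLp 2 (Fin m → ℝ)).symm) x) i ^ 2) = ‖x‖ ^ 2 := by
      intro x
      rw [EuclideanSpace.norm_eq, Real.sq_sqrt (by positivity)]
      simp only [Real.norm_eq_abs, sq_abs]
      rfl
    have h1 : ((fun w : Fin m → ℝ => (∑ i, w i ^ 2) ^ (-e)) ∘
        ((MeasurableEquiv.toLp 2 (Fin m → ℝ)).symm))
        = fun x : EuclideanSpace ℝ (Fin m) => ‖x‖ ^ (-(2*e)) := by
      funext x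
      simp only [Function.comp_apply]
      rw [hnormsq x]
      have h2 : (‖x‖ ^ 2 : ℝ) = ‖x‖ ^ (2:ℝ) := by
        rw [← Real.rpow_natCast ‖x‖ 2]; norm_num
      rw [h2, ← Real.rpow_mul (norm_nonneg _)]
      ring_nf
    have h2 : ((MeasurableEquiv.toLp 2 (Fin m → ℝ)).symm) ⁻¹'
        {w : Fin m → ℝ | ∑ i, w i ^ 2 < δ ^ 2} = Metric.ball 0 δ := by
      ext x
      simp only [Set.mem_preimage, Set.mem_setOf_eq, Metric.mem_ball, dist_zero_right]
      rw [hnormsq x]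
      exact pow_lt_pow_iff_left₀ (norm_nonneg _) hδpos.le two_ne_zero
    rw [h1, h2]
    exact h0
  have hG0 : IntegrableOn (fun z : Fin m → ℝ => (∑ i, (z i - y i) ^ 2) ^ (-e)) S volume := by
    have hmp := measurePreserving_add_right (volume : Measure (Fin m → ℝ)) y
    have hemb : MeasurableEmbedding (fun z : Fin m → ℝ => z + y) :=
      (MeasurableEquiv.addRight y).measurableEmbedding
    rw [← hmp.integrableOn_comp_preimage hemb]
    have h1 : ((fun z : Fin m → ℝ => (∑ i, (z i - y i) ^ 2) ^ (-e)) ∘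
        (fun z : Fin m → ℝ => z + y)) = fun w : Fin m → ℝ => (∑ i, w i ^ 2) ^ (-e) := by
      funext w
      simp [Function.comp_apply]
    have h2 : (fun z : Fin m → ℝ => z + y) ⁻¹' S = {w : Fin m → ℝ | ∑ i, w i ^ 2 < δ ^ 2} := by
      ext w
      simp [hSdef]
    rw [h1, h2]
    exact hF
  -- comparison
  have hdom : IntegrableOn (fun z : Fin m → ℝ =>
      c' ^ (-e) * (∑ i, (z i - y i) ^ 2) ^ (-e)) S volume := hG0.const_mul _
  apply Integrable.mono' hdom
  · apply Measurable.aestronglyMeasurable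
    have hev : Measurable (fun z : Fin m → ℝ => eval z p) :=
      (MvPolynomial.continuous_eval p).measurable
    fun_prop
  · rw [ae_restrict_iff' hSmeas]
    apply Filter.Eventually.of_forall
    intro z hz
    have hfz : 0 ≤ eval z p := hnn z
    have hnor : ‖(eval z p) ^ (-e)‖ = (eval z p) ^ (-e) := by
      rw [Real.norm_eq_abs, abs_of_nonneg (Real.rpow_nonneg hfz _)]
    rw [hnor]
    set Q : ℝ := ∑ i, (z i - y i) ^ 2 with hQ
    have hQnn : 0 ≤ Q := Finset.sum_nonneg (fun i _ => sq_nonneg _)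
    rcases eq_or_lt_of_le hQnn with hQ0 | hQpos
    · -- Q = 0 means z = y
      have hzy : z = y := by
        funext i
        have := (Finset.sum_eq_zero_iff_of_nonneg (fun j _ => sq_nonneg (z j - y j))).1
          hQ0.symm i (Finset.mem_univ i)
        have := sq_eq_zero_iff.1 this
        linarith [this]
      rw [hzy, hy, Real.zero_rpow (neg_ne_zero.2 hepos.ne')]
      positivity
    · have hlow : c' * Q ≤ eval z p := hlbS z hz
      have hcp : 0 < c' * Q := mul_pos hc'pos hQpos
      calc (eval z p) ^ (-e) ≤ (c' * Q) ^ (-e) :=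
            Real.rpow_le_rpow_of_nonpos hcp hlow (by linarith)
        _ = c' ^ (-e) * Q ^ (-e) := Real.mul_rpow hc'pos.le hQnn
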